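/- For all natural numbers n, \sum_{k=0}^n \frac{(2n-k)!}{(n-k)!(n-k)!k!} = \sum_{k=0}^n \binom{n}{k}^2 2^k. -/

import Mathlib

open Finset

lemma aux1 (n i : ℕ) (hi : i ≤ n) :
    ∑ k ∈ range (n + 1), n.choose k * k.choose i = n.choose i * 2 ^ (n - i) := by
  have h : ∀ k ∈ range (n + 1),
      n.choose k * k.choose i = if i ≤ k then n.choose i * (n - i).choose (k - i) else 0 := by
    intro k hk
    simp only [mem_range] at hk
    by_cases h : i ≤ k
    · rw [if_pos h, Nat.choose_mul h]
    · rw [if_neg h, Nat.choose_eq_zero_of_lt (lt_of_not_ge h), mul_zero]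
  rw [Finset.sum_congr rfl h, Finset.sum_ite, Finset.sum_const_zero, add_zero]
  have : Finset.filter (fun k => i ≤ k) (range (n + 1)) = Ico i (n + 1) := by
    ext x; simp [Nat.lt_succ_iff]; omega
  rw [this, Finset.sum_Ico_eq_sum_range]
  simp only [Nat.add_sub_cancel_left]
  rw [← Finset.mul_sum]
  have : n + 1 - i = n - i + 1 := by omega
  rw [this, Nat.sum_range_choose]

lemma aux2 (n k : ℕ) (hk : k ≤ n) :
    (n + k).choose k = ∑ i ∈ range (n + 1), n.choose i * k.choose i := by
  rw [Nat.add_choose_eq, Finset.Nat.sum_antidiagonal_eq_sum_range_succ_mk]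
  have h1 : ∀ i ∈ range (k + 1), n.choose i * k.choose (k - i) = n.choose i * k.choose i := by
    intro i hi
    simp only [mem_range, Nat.lt_succ_iff] at hi
    rw [Nat.choose_symm hi]
  rw [Finset.sum_congr rfl h1]
  apply Finset.sum_subset (Finset.range_subset_range.mpr (by omega))
  intro x _ hx
  simp only [mem_range, Nat.lt_succ_iff, not_le] at hx
  rw [Nat.choose_eq_zero_of_lt hx, mul_zero]

lemma key (n : ℕ) :
    ∑ k ∈ range (n + 1), (n + k).choose k * n.choose k
      = ∑ k ∈ range (n + 1), n.choose k ^ 2 * 2 ^ k := by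
  have h1 : ∀ k ∈ range (n + 1),
      (n + k).choose k * n.choose k
        = ∑ i ∈ range (n + 1), n.choose i * k.choose i * n.choose k := by
    intro k hk
    simp only [mem_range, Nat.lt_succ_iff] at hk
    rw [aux2 n k hk, Finset.sum_mul]
  rw [Finset.sum_congr rfl h1, Finset.sum_comm]
  have h2 : ∀ i ∈ range (n + 1),
      ∑ k ∈ range (n + 1), n.choose i * k.choose i * n.choose k
        = n.choose i ^ 2 * 2 ^ (n - i) := by
    intro i hi
    simp only [mem_range, Nat.lt_succ_iff] at hi
    calc ∑ k ∈ range (n + 1), n.choose i * k.choose i * n.choose k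
        = n.choose i * ∑ k ∈ range (n + 1), n.choose k * k.choose i := by
          rw [Finset.mul_sum]; congr 1; ext k; ring
      _ = n.choose i * (n.choose i * 2 ^ (n - i)) := by rw [aux1 n i hi]
      _ = n.choose i ^ 2 * 2 ^ (n - i) := by ring
  rw [Finset.sum_congr rfl h2, ← Finset.sum_range_reflect (fun k => n.choose k ^ 2 * 2 ^ k) (n+1)]
  apply Finset.sum_congr rfl
  intro i hi
  simp only [mem_range, Nat.lt_succ_iff] at hi
  simp only [Nat.add_sub_cancel]
  rw [Nat.choose_symm hi]

theorem delannoy_formulas (n : ℕ) :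
    ∑ k ∈ Finset.range (n + 1),
        ((Nat.factorial (2 * n - k) : ℚ) /
          ((Nat.factorial (n - k)) * (Nat.factorial (n - k)) * (Nat.factorial k)))
      = ∑ k ∈ Finset.range (n + 1), ((n.choose k : ℚ)) ^ 2 * 2 ^ k := by
  have h1 : ∀ k ∈ Finset.range (n + 1),
      ((Nat.factorial (2 * n - k) : ℚ) /
          ((Nat.factorial (n - k)) * (Nat.factorial (n - k)) * (Nat.factorial k)))
        = ((2 * n - k).choose (n - k) * n.choose k : ℕ) := by
    intro k hk
    simp only [mem_range, Nat.lt_succ_iff] at hk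
    rw [div_eq_iff (by positivity)]
    have hnat : (2 * n - k).factorial
        = (2 * n - k).choose (n - k) * n.choose k * ((n - k).factorial * (n - k).factorial * k.factorial) := by
      have h2 : n - k ≤ 2 * n - k := by omega
      have e1 := Nat.choose_mul_factorial_mul_factorial h2
      have e2 := Nat.choose_mul_factorial_mul_factorial hk
      have h3 : 2 * n - k - (n - k) = n := by omega
      rw [h3] at e1
      calc (2 * n - k).factorial
          = (2 * n - k).choose (n - k) * (n - k).factorial * n.factorial := e1.symm
        _ = (2 * n - k).choose (n - k) * (n - k).factorial * (n.choose k * k.factorial * (n - k).factorial) := by rw [e2]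
        _ = _ := by ring
    push_cast [hnat]
    ring
  rw [Finset.sum_congr rfl h1]
  have h4 : ∑ k ∈ Finset.range (n + 1), (((2 * n - k).choose (n - k) * n.choose k : ℕ) : ℚ)
      = ((∑ k ∈ Finset.range (n + 1), (n + k).choose k * n.choose k : ℕ) : ℚ) := by
    push_cast
    rw [← Finset.sum_range_reflect (fun k => (((n + k).choose k : ℚ)) * n.choose k) (n+1)]
    apply Finset.sum_congr rfl
    intro i hi
    simp only [mem_range, Nat.lt_succ_iff] at hi
    simp only [Nat.add_sub_cancel]
    have e1 : n + (n - i) = 2 * n - i := by omega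
    rw [e1, Nat.choose_symm hi]
  rw [h4, key]
  push_cast
  ring
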